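/- Let φ : ℝ → ℝ be measurable with φ(0) = 0 and suppose there exists C ≥ 0 such that |φ(u)| ≤ C·|u| for all u ∈ ℝ. Then the following are equivalent: (i) for all τ ∈ ℝ and all signals x in L²[0,∞), |∫₀^∞ x(t+τ)·φ(x(t)) dt| ≤ ∫₀^∞ x(t)·φ(x(t)) dt; (ii) φ is monotone nondecreasing and odd almost everywhere, i.e. φ(−u) = −φ(u) for almost every u ∈ ℝ. -/

import Mathlib

open MeasureTheory Set intervalIntegral

/-- A signal in L²[0,∞): square integrable over ℝ and vanishing on (−∞,0). -/
def IsSignal (x : ℝ → ℝ) : Prop :=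
  MemLp x 2 volume ∧ ∀ t < (0:ℝ), x t = 0

private lemma meas_floorcomp (H : ℕ → ℝ) : Measurable (fun t : ℝ => H ⌊t⌋.toNat) :=
  (measurable_of_countable (fun k : ℤ => H k.toNat)).comp Int.measurable_floor

private lemma intOn_floorcomp (H : ℕ → ℝ) (m : ℕ) :
    IntegrableOn (fun t : ℝ => H ⌊t⌋.toNat) (Ico (0:ℝ) (m:ℝ)) := by
  apply Integrable.mono' (g := fun _ => ∑ k ∈ Finset.range m, |H k|)
  · exact integrableOn_const (by rw [Real.volume_Ico]; exact ENNReal.ofReal_ne_top)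
  · exact (meas_floorcomp H).aestronglyMeasurable
  · rw [ae_restrict_iff' measurableSet_Ico]
    filter_upwards with t ht
    have h0 : (0:ℤ) ≤ ⌊t⌋ := Int.floor_nonneg.2 ht.1
    have h1 : ⌊t⌋ < (m:ℤ) := Int.floor_lt.2 (by exact_mod_cast ht.2)
    have h2 : ⌊t⌋.toNat < m := by omega
    exact Finset.single_le_sum (f := fun k => |H k|) (fun i _ => abs_nonneg _)
      (Finset.mem_range.2 h2)

private lemma int_Ico_unit (H : ℕ → ℝ) (k : ℕ) :
    ∫ t in Ico (k:ℝ) ((k:ℝ)+1), H ⌊t⌋.toNat = H k := by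
  rw [setIntegral_congr_fun measurableSet_Ico (g := fun _ => H k) ?_]
  · simp [Real.volume_Ico]
  · intro t ht
    have : ⌊t⌋ = (k:ℤ) := by
      rw [Int.floor_eq_iff]
      exact ⟨by exact_mod_cast ht.1, by exact_mod_cast ht.2⟩
    simp [this]

private lemma int_Ico_sum (H : ℕ → ℝ) (m : ℕ) :
    ∫ t in Ico (0:ℝ) (m:ℝ), H ⌊t⌋.toNat = ∑ k ∈ Finset.range m, H k := by
  induction m with
  | zero => simp
  | succ m ih =>
    have hsplit : Ico (0:ℝ) ((m:ℕ)+1:ℕ) = Ico (0:ℝ) (m:ℝ) ∪ Ico (m:ℝ) ((m:ℝ)+1) := by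
      rw [Ico_union_Ico_eq_Ico (by exact_mod_cast Nat.cast_nonneg m)
        (by push_cast; linarith)]
      push_cast; ring_nf
    rw [hsplit, setIntegral_union (Ico_disjoint_Ico_same) measurableSet_Ico
      (intOn_floorcomp H m) ?_, ih, int_Ico_unit, Finset.sum_range_succ]
    · have : Ico (m:ℝ) ((m:ℝ)+1) ⊆ Ico (0:ℝ) ((m:ℝ)+1) := by
        apply Ico_subset_Ico (by positivity) le_rfl
      have h2 := (intOn_floorcomp H (m+1)).mono_set (by push_cast at this ⊢; exact this)
      exact h2

private lemma step_eq_indicator (H : ℕ → ℝ) (n : ℕ) :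
    (fun t : ℝ => if 0 ≤ t ∧ t < (n:ℝ) then H ⌊t⌋.toNat else 0)
      = (Ico (0:ℝ) (n:ℝ)).indicator (fun t => H ⌊t⌋.toNat) := by
  funext t
  by_cases h : 0 ≤ t ∧ t < (n:ℝ)
  · rw [if_pos h, indicator_of_mem (mem_Ico.2 h)]
  · rw [if_neg h, indicator_of_notMem (fun hc => h (mem_Ico.1 hc))]

private lemma floorint (H : ℕ → ℝ) (n : ℕ) :
    ∫ t in Ici (0:ℝ), (if 0 ≤ t ∧ t < (n:ℝ) then H ⌊t⌋.toNat else 0)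
      = ∑ k ∈ Finset.range n, H k := by
  rw [← MeasureTheory.integral_indicator measurableSet_Ici]
  have h1 : (Ici (0:ℝ)).indicator (fun t => if 0 ≤ t ∧ t < (n:ℝ) then H ⌊t⌋.toNat else 0)
      = (Ico (0:ℝ) (n:ℝ)).indicator (fun t => H ⌊t⌋.toNat) := by
    rw [← step_eq_indicator]
    apply indicator_eq_self.2
    intro t ht
    rw [Function.mem_support] at ht
    by_contra h
    exact ht (if_neg (fun hc => h hc.1))
  rw [h1, MeasureTheory.integral_indicator measurableSet_Ico, int_Ico_sum]

private lemma isSignal_step (c : ℕ → ℝ) (n : ℕ) :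
    IsSignal (fun t => if 0 ≤ t ∧ t < (n:ℝ) then c ⌊t⌋.toNat else 0) := by
  constructor
  · have hm : Measurable (fun t : ℝ => if 0 ≤ t ∧ t < (n:ℝ) then c ⌊t⌋.toNat else 0) := by
      rw [step_eq_indicator]
      exact (meas_floorcomp c).indicator measurableSet_Ico
    rw [memLp_two_iff_integrable_sq hm.aestronglyMeasurable]
    have : (fun t : ℝ => (if 0 ≤ t ∧ t < (n:ℝ) then c ⌊t⌋.toNat else 0) ^ 2)
        = (Ico (0:ℝ) (n:ℝ)).indicator (fun t => (fun k => (c k)^2) ⌊t⌋.toNat) := by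
      funext t
      by_cases h : 0 ≤ t ∧ t < (n:ℝ)
      · rw [if_pos h, indicator_of_mem (mem_Ico.2 h)]
      · rw [if_neg h, indicator_of_notMem (fun hc => h (mem_Ico.1 hc))]
        norm_num
    rw [this]
    exact (intOn_floorcomp (fun k => (c k)^2) n).integrable_indicator measurableSet_Ico
  · intro t ht
    exact if_neg (fun hc => absurd hc.1 (not_le.2 ht))

private lemma sum_parity (A B : ℝ) (N : ℕ) :
    ∑ k ∈ Finset.range (2*N), (if Even k then A else B) = N * (A + B) := by
  induction N with
  | zero => simp
  | succ N ih =>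
    have h2 : 2*(N+1) = (2*N)+1+1 := by ring
    rw [h2, Finset.sum_range_succ, Finset.sum_range_succ, ih]
    have he : Even (2*N) := even_two_mul N
    have ho : ¬ Even (2*N+1) := by simp [Nat.even_add_one, he]
    rw [if_pos he, if_neg ho]
    push_cast; ring

private lemma cross_sum_odd (a b : ℝ) (φ : ℝ → ℝ) (N : ℕ) :
    ∑ k ∈ Finset.range (2*N+1),
      ((if Even (k+1) then a else b) * φ (if Even k then a else b))
      = ((N:ℝ)+1) * (b * φ a) + (N:ℝ) * (a * φ b) := by
  induction N with
  | zero =>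
    simp
  | succ N ih =>
    have h2 : 2*(N+1)+1 = (2*N+1)+1+1 := by ring
    rw [h2, Finset.sum_range_succ, Finset.sum_range_succ, ih]
    have he : Even (2*N+1+1) := by simp [Nat.even_add_one]
    have ho : ¬ Even (2*N+1) := by simp [Nat.even_add_one]
    have he2 : Even (2*N+1+1+1) = False := by simp [Nat.even_add_one, parity_simps]
    rw [if_pos he, if_neg ho]
    simp only [he2, if_false, if_pos he]
    push_cast; ring

private lemma self_integral (φ : ℝ → ℝ) (hφ0 : φ 0 = 0) (c : ℕ → ℝ) (n : ℕ) :
    (∫ t in Ici (0:ℝ),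
        (if 0 ≤ t ∧ t < (n:ℝ) then c ⌊t⌋.toNat else 0)
          * φ (if 0 ≤ t ∧ t < (n:ℝ) then c ⌊t⌋.toNat else 0))
      = ∑ k ∈ Finset.range n, c k * φ (c k) := by
  rw [← floorint (fun k => c k * φ (c k)) n]
  apply setIntegral_congr_fun measurableSet_Ici
  intro t _
  beta_reduce
  by_cases h : 0 ≤ t ∧ t < (n:ℝ)
  · rw [if_pos h, if_pos h]
  · rw [if_neg h, if_neg h, hφ0, mul_zero]

private lemma cross_integral (φ : ℝ → ℝ) (hφ0 : φ 0 = 0) (c : ℕ → ℝ) (n : ℕ) :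
    (∫ t in Ici (0:ℝ),
        (if 0 ≤ t + 1 ∧ t + 1 < (n:ℝ) then c ⌊t + 1⌋.toNat else 0)
          * φ (if 0 ≤ t ∧ t < (n:ℝ) then c ⌊t⌋.toNat else 0))
      = ∑ k ∈ Finset.range n, (if k+1 < n then c (k+1) else 0) * φ (c k) := by
  rw [← floorint (fun k => (if k+1 < n then c (k+1) else 0) * φ (c k)) n]
  apply setIntegral_congr_fun measurableSet_Ici
  intro t ht
  beta_reduce
  rw [mem_Ici] at ht
  by_cases h : t < (n:ℝ)
  · have h1 : 0 ≤ t ∧ t < (n:ℝ) := ⟨ht, h⟩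
    rw [if_pos h1, if_pos h1]
    have hfl : (0:ℤ) ≤ ⌊t⌋ := Int.floor_nonneg.2 ht
    have hfl1 : ⌊t + 1⌋ = ⌊t⌋ + 1 := Int.floor_add_one t
    have htn : ⌊t + 1⌋.toNat = ⌊t⌋.toNat + 1 := by omega
    have hc : ((⌊t⌋.toNat : ℝ)) = ((⌊t⌋ : ℝ)) := by exact_mod_cast Int.toNat_of_nonneg hfl
    have hiff : (t + 1 < (n:ℝ)) ↔ (⌊t⌋.toNat + 1 < n) := by
      constructor
      · intro hlt
        have h5 : ⌊t+1⌋ < (n:ℤ) := Int.floor_lt.2 (by exact_mod_cast hlt)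
        omega
      · intro hlt
        have h2 : t + 1 < ((⌊t⌋.toNat:ℝ) + 1) + 1 := by
          have h4 := Int.lt_floor_add_one t
          rw [hc]; linarith
        have h3 : ((⌊t⌋.toNat:ℝ) + 1) + 1 ≤ (n:ℝ) := by exact_mod_cast hlt
        linarith
    by_cases h2 : t + 1 < (n:ℝ)
    · rw [if_pos ⟨by linarith, h2⟩, if_pos (hiff.1 h2), htn]
    · rw [if_neg (fun hcon => h2 hcon.2), if_neg (fun hcon => h2 (hiff.2 hcon))]
  · have h1 : ¬ (0 ≤ t ∧ t < (n:ℝ)) := fun hc => h hc.2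
    rw [if_neg h1, if_neg h1, hφ0, mul_zero]

theorem key_ineq (φ : ℝ → ℝ) (hφ0 : φ 0 = 0)
    (h : ∀ (τ : ℝ) (x : ℝ → ℝ), IsSignal x →
      |∫ t in Ici (0:ℝ), x (t + τ) * φ (x t)| ≤ ∫ t in Ici (0:ℝ), x t * φ (x t)) :
    ∀ a b : ℝ, |a * φ b + b * φ a| ≤ a * φ a + b * φ b := by
  intro a b
  have hN : ∀ N : ℕ, |((N:ℝ)+1) * (b * φ a) + (N:ℝ) * (a * φ b)|
      ≤ ((N:ℝ)+1) * (a * φ a + b * φ b) := by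
    intro N
    set c : ℕ → ℝ := fun k => if Even k then a else b with hc
    have h1 := h 1 _ (isSignal_step c (2*(N+1)))
    rw [self_integral φ hφ0 c (2*(N+1)), cross_integral φ hφ0 c (2*(N+1))] at h1
    have hself : ∑ k ∈ Finset.range (2*(N+1)), c k * φ (c k)
        = ((N:ℝ)+1) * (a * φ a + b * φ b) := by
      rw [show (∑ k ∈ Finset.range (2*(N+1)), c k * φ (c k))
          = ∑ k ∈ Finset.range (2*(N+1)), (if Even k then a * φ a else b * φ b) from
        Finset.sum_congr rfl (fun k _ => by by_cases hk : Even k <;> simp [hc, hk]),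
        sum_parity]
      push_cast; ring
    have hcross : ∑ k ∈ Finset.range (2*(N+1)),
          (if k+1 < 2*(N+1) then c (k+1) else 0) * φ (c k)
        = ((N:ℝ)+1) * (b * φ a) + (N:ℝ) * (a * φ b) := by
      have hn2 : 2*(N+1) = (2*N+1)+1 := by omega
      rw [hn2, Finset.sum_range_succ, if_neg (lt_irrefl _), zero_mul, add_zero]
      have hstep : ∀ k ∈ Finset.range (2*N+1),
          (if k+1 < (2*N+1)+1 then c (k+1) else 0) * φ (c k)
            = (if Even (k+1) then a else b) * φ (if Even k then a else b) := by
        intro k hk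
        rw [if_pos (by have := Finset.mem_range.1 hk; omega)]
      rw [Finset.sum_congr rfl hstep, cross_sum_odd]
    rw [hself, hcross] at h1
    exact h1
  by_contra hcon
  push_neg at hcon
  set P := b * φ a
  set Q := a * φ b
  set R := a * φ a + b * φ b
  have hpos : 0 < |Q + P| - R := by
    have : R < |a * φ b + b * φ a| := hcon
    simpa using sub_pos.2 this
  obtain ⟨N, hNgt⟩ := exists_nat_gt (|Q| / (|Q + P| - R))
  have h1 := hN N
  have h2 : |Q| < ((N:ℝ)+1) * (|Q + P| - R) := by
    calc |Q| = (|Q| / (|Q + P| - R)) * (|Q + P| - R) := (div_mul_cancel₀ _ hpos.ne').symm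
    _ < (N:ℝ) * (|Q + P| - R) := mul_lt_mul_of_pos_right hNgt hpos
    _ ≤ ((N:ℝ)+1) * (|Q + P| - R) := by nlinarith
  have h3 : ((N:ℝ)+1) * |Q + P| - |Q| ≤ |((N:ℝ)+1) * P + (N:ℝ) * Q| := by
    have he : ((N:ℝ)+1) * P + (N:ℝ) * Q = ((N:ℝ)+1) * (Q + P) - Q := by ring
    rw [he]
    have h4 := abs_sub_abs_le_abs_sub (((N:ℝ)+1) * (Q + P)) Q
    rw [abs_mul, abs_of_nonneg (by positivity : (0:ℝ) ≤ (N:ℝ)+1)] at h4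
    linarith
  nlinarith

theorem mono_of_key (φ : ℝ → ℝ)
    (key : ∀ a b : ℝ, |a * φ b + b * φ a| ≤ a * φ a + b * φ b) :
    Monotone φ := by
  intro u v huv
  rcases eq_or_lt_of_le huv with rfl | hlt
  · exact le_rfl
  · have h := (abs_le.1 (key u v)).2
    nlinarith

theorem odd_of_key (φ : ℝ → ℝ)
    (key : ∀ a b : ℝ, |a * φ b + b * φ a| ≤ a * φ a + b * φ b) :
    ∀ᵐ u ∂(volume : Measure ℝ), φ (-u) = -φ u := by
  have hmono := mono_of_key φ key
  have hsign : ∀ a b : ℝ, 0 ≤ (a - b) * (φ a + φ (-b)) := by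
    intro a b
    have h := (abs_le.1 (key a (-b))).1
    nlinarith
  have hcont : ∀ b : ℝ, ContinuousAt φ b → φ (-b) = -φ b := by
    intro b hb
    have htend : Filter.Tendsto φ (nhdsWithin b (Ioi b)) (nhds (φ b)) :=
      hb.continuousWithinAt.tendsto
    have htend' : Filter.Tendsto φ (nhdsWithin b (Iio b)) (nhds (φ b)) :=
      hb.continuousWithinAt.tendsto
    have h1 : -φ (-b) ≤ φ b := by
      apply ge_of_tendsto htend
      filter_upwards [self_mem_nhdsWithin] with a ha
      rw [mem_Ioi] at ha
      have := hsign a b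
      nlinarith [this, sub_pos.2 ha]
    have h2 : φ b ≤ -φ (-b) := by
      apply le_of_tendsto htend'
      filter_upwards [self_mem_nhdsWithin] with a ha
      rw [mem_Iio] at ha
      have := hsign a b
      nlinarith [this, sub_neg.2 ha]
    linarith
  have hcnt : Set.Countable {u : ℝ | ¬ ContinuousAt φ u} := hmono.countable_not_continuousAt
  have hnull : (volume : Measure ℝ) {u : ℝ | ¬ ContinuousAt φ u} = 0 :=
    hcnt.measure_zero _
  rw [ae_iff]
  apply measure_mono_null _ hnull
  intro u hu
  simp only [mem_setOf_eq] at hu ⊢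
  intro hc
  exact hu (hcont u hc)

private lemma prod_integrable {f g : ℝ → ℝ} (hf : MemLp f 2 volume) (hg : MemLp g 2 volume) :
    Integrable (fun t => f t * g t) volume := by
  have h1 := hf.integrable_sq
  have h2 := hg.integrable_sq
  apply Integrable.mono' (((h1.add h2).const_mul (1/2)))
    (hf.aestronglyMeasurable.mul hg.aestronglyMeasurable)
  filter_upwards with t
  simp only [Pi.mul_apply, Pi.add_apply, Real.norm_eq_abs]
  nlinarith [sq_nonneg (|f t| - |g t|), abs_mul (f t) (g t), sq_abs (f t), sq_abs (g t),
    abs_nonneg (f t * g t)]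

theorem backward_dir (φ : ℝ → ℝ) (hφ : Measurable φ) (hφ0 : φ 0 = 0)
    (C : ℝ) (hC0 : 0 ≤ C) (hC : ∀ u, |φ u| ≤ C * |u|)
    (hmono : Monotone φ) (hodd : ∀ᵐ u ∂(volume : Measure ℝ), φ (-u) = -φ u)
    (τ : ℝ) (x : ℝ → ℝ) (hx2 : MemLp x 2 volume) (hx0 : ∀ t < (0:ℝ), x t = 0) :
    |∫ t in Ici (0:ℝ), x (t + τ) * φ (x t)| ≤ ∫ t in Ici (0:ℝ), x t * φ (x t) := by
  set Φ : ℝ → ℝ := fun u => ∫ s in (0:ℝ)..u, φ s with hΦdef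
  have hii : ∀ a b : ℝ, IntervalIntegrable φ volume a b := fun a b => hmono.intervalIntegrable
  have hΦcont : Continuous Φ := intervalIntegral.continuous_primitive hii 0
  have hΦ0 : Φ 0 = 0 := integral_same
  have hφpos : ∀ u : ℝ, 0 ≤ u → 0 ≤ φ u := fun u hu => hφ0 ▸ hmono hu
  have hφneg : ∀ u : ℝ, u ≤ 0 → φ u ≤ 0 := fun u hu => hφ0 ▸ hmono hu
  have hΦnonneg : ∀ u : ℝ, 0 ≤ Φ u := by
    intro u
    rcases le_total 0 u with hu | hu
    · exact intervalIntegral.integral_nonneg hu (fun t ht => hφpos t ht.1)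
    · rw [hΦdef]
      simp only
      rw [intervalIntegral.integral_symm]
      have : ∫ s in u..(0:ℝ), φ s ≤ 0 := by
        have := intervalIntegral.integral_mono_on (f := φ) (g := fun _ => (0:ℝ)) hu
          (hii u 0) (intervalIntegrable_const) (fun t ht => hφneg t ht.2)
        simpa using this
      linarith
  have hΦbound : ∀ u : ℝ, Φ u ≤ C/2 * u^2 := by
    intro u
    rcases le_total 0 u with hu | hu
    · have h1 : Φ u ≤ ∫ s in (0:ℝ)..u, C * s := by
        apply intervalIntegral.integral_mono_on hu (hii 0 u)
          (Continuous.intervalIntegrable (by continuity) 0 u)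
        intro s hs
        calc φ s ≤ |φ s| := le_abs_self _
        _ ≤ C * |s| := hC s
        _ = C * s := by rw [abs_of_nonneg hs.1]
      have h2 : ∫ s in (0:ℝ)..u, C * s = C/2 * u^2 := by
        rw [intervalIntegral.integral_const_mul, integral_id]
        ring
      linarith
    · have heq : Φ u = ∫ s in u..(0:ℝ), -φ s := by
        rw [hΦdef]
        simp only
        rw [intervalIntegral.integral_symm, ← intervalIntegral.integral_neg]
      have h1 : ∫ s in u..(0:ℝ), -φ s ≤ ∫ s in u..(0:ℝ), C * (-s) := by
        apply intervalIntegral.integral_mono_on hu ((hii u 0).neg)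
          (Continuous.intervalIntegrable (by continuity) u 0)
        intro s hs
        calc -φ s ≤ |φ s| := neg_le_abs _
        _ ≤ C * |s| := hC s
        _ = C * (-s) := by rw [abs_of_nonpos hs.2]
      have h2 : ∫ s in u..(0:ℝ), C * (-s) = C/2 * u^2 := by
        rw [show (fun s : ℝ => C * (-s)) = fun s : ℝ => (-C) * s from by funext s; ring]
        rw [intervalIntegral.integral_const_mul, integral_id]
        ring
      linarith [heq ▸ h1]
  have hgrad : ∀ a b : ℝ, φ b * (a - b) ≤ Φ a - Φ b := by
    intro a b
    have hsub : Φ a - Φ b = ∫ s in b..a, φ s :=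
      intervalIntegral.integral_interval_sub_left (hii 0 a) (hii 0 b)
    rw [hsub]
    rcases le_total b a with hab | hab
    · have h1 : ∫ s in b..a, (fun _ => φ b) s ≤ ∫ s in b..a, φ s :=
        intervalIntegral.integral_mono_on hab intervalIntegrable_const (hii b a)
          (fun s hs => hmono hs.1)
      rw [intervalIntegral.integral_const] at h1
      rw [smul_eq_mul] at h1
      nlinarith [h1]
    · rw [intervalIntegral.integral_symm]
      have h1 : ∫ s in a..b, φ s ≤ ∫ s in a..b, (fun _ => φ b) s :=
        intervalIntegral.integral_mono_on hab (hii a b) intervalIntegrable_const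
          (fun s hs => hmono hs.2)
      rw [intervalIntegral.integral_const, smul_eq_mul] at h1
      nlinarith [h1]
  have hΦeven : ∀ u : ℝ, Φ (-u) = Φ u := by
    intro u
    have h1 : ∫ s in (0:ℝ)..u, φ (-s) = ∫ s in (-u)..(0:ℝ), φ s := by
      have := intervalIntegral.integral_comp_neg (a := (0:ℝ)) (b := u) (f := φ)
      simpa using this
    have h2 : ∫ s in (0:ℝ)..u, φ (-s) = ∫ s in (0:ℝ)..u, -φ s := by
      apply intervalIntegral.integral_congr_ae
      filter_upwards [hodd] with s hs _
      exact hs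
    have h3 : ∫ s in (-u)..(0:ℝ), φ s = -Φ (-u) := by
      rw [hΦdef]
      simp only
      rw [intervalIntegral.integral_symm]
    rw [h3, h2, intervalIntegral.integral_neg] at h1
    rw [hΦdef] at h1 ⊢
    simp only at h1 ⊢
    linarith
  -- integrability
  have hxτ2 : MemLp (fun t => x (t + τ)) 2 volume :=
    hx2.comp_measurePreserving (measurePreserving_add_right volume τ)
  have hφx2 : MemLp (fun t => φ (x t)) 2 volume := by
    apply MemLp.of_le (hx2.const_mul C)
      (hφ.comp_aemeasurable hx2.aestronglyMeasurable.aemeasurable).aestronglyMeasurable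
    filter_upwards with t
    simp only [Function.comp_apply, Real.norm_eq_abs]
    calc |φ (x t)| ≤ C * |x t| := hC _
    _ = |C * x t| := by rw [abs_mul, abs_of_nonneg hC0]
    _ = ‖C * x t‖ := rfl
  have hA : Integrable (fun t => x t * φ (x t)) volume := prod_integrable hx2 hφx2
  have hB : Integrable (fun t => x (t + τ) * φ (x t)) volume := prod_integrable hxτ2 hφx2
  have hΦx : Integrable (fun t => Φ (x t)) volume := by
    apply Integrable.mono' (hx2.integrable_sq.const_mul (C/2))
      (hΦcont.comp_aestronglyMeasurable hx2.aestronglyMeasurable)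
    filter_upwards with t
    have h1 : ‖Φ (x t)‖ = Φ (x t) := by
      rw [Real.norm_eq_abs, abs_of_nonneg (hΦnonneg _)]
    rw [h1]
    exact hΦbound _
  have hΦxτ : Integrable (fun t => Φ (x (t + τ))) volume := by
    apply Integrable.mono' (hxτ2.integrable_sq.const_mul (C/2))
      (hΦcont.comp_aestronglyMeasurable hxτ2.aestronglyMeasurable)
    filter_upwards with t
    have h1 : ‖Φ (x (t + τ))‖ = Φ (x (t + τ)) := by
      rw [Real.norm_eq_abs, abs_of_nonneg (hΦnonneg _)]
    rw [h1]
    exact hΦbound _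
  -- shift inequality
  have hshift : ∫ t in Ici (0:ℝ), Φ (x (t + τ)) ≤ ∫ t in Ici (0:ℝ), Φ (x t) := by
    have e1 : ∫ t in Ici (0:ℝ), Φ (x (t + τ)) = ∫ t in Ici τ, Φ (x t) := by
      rw [← MeasureTheory.integral_indicator measurableSet_Ici, ← MeasureTheory.integral_indicator measurableSet_Ici]
      rw [← integral_add_right_eq_self ((Ici τ).indicator (fun t => Φ (x t))) τ]
      congr 1
      funext t
      by_cases h : (0:ℝ) ≤ t
      · rw [indicator_of_mem (mem_Ici.2 h), indicator_of_mem (mem_Ici.2 (by linarith))]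
      · rw [indicator_of_notMem (fun hc => h (mem_Ici.1 hc)),
          indicator_of_notMem (fun hc => h (by have := mem_Ici.1 hc; linarith))]
    have e2 : ∫ t in Ici τ, Φ (x t) ≤ ∫ t, Φ (x t) := by
      apply setIntegral_le_integral hΦx
      filter_upwards with t
      exact hΦnonneg _
    have e3 : ∫ t, Φ (x t) = ∫ t in Ici (0:ℝ), Φ (x t) := by
      rw [← integral_add_compl measurableSet_Ici hΦx]
      have hz : ∫ t in (Ici (0:ℝ))ᶜ, Φ (x t) = 0 := by
        rw [setIntegral_congr_fun measurableSet_Ici.compl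
          (g := fun _ => (0:ℝ)) ?_]
        · simp
        · intro t ht
          rw [mem_compl_iff, mem_Ici, not_le] at ht
          show Φ (x t) = 0
          rw [hx0 t ht, hΦ0]
      rw [hz, add_zero]
    linarith [e1 ▸ le_trans e2 e3.le]
  -- main pointwise bound and conclusion
  have main : ∀ ε : ℝ, ε = 1 ∨ ε = -1 →
      ε * ∫ t in Ici (0:ℝ), x (t + τ) * φ (x t) ≤ ∫ t in Ici (0:ℝ), x t * φ (x t) := by
    intro ε hε
    have hΦe : ∀ v : ℝ, Φ (ε * v) = Φ v := by
      intro v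
      rcases hε with rfl | rfl
      · rw [one_mul]
      · rw [neg_one_mul, hΦeven]
    have hpt : ∀ t : ℝ, ε * (x (t + τ) * φ (x t))
        ≤ Φ (x (t + τ)) - Φ (x t) + x t * φ (x t) := by
      intro t
      have h := hgrad (ε * x (t + τ)) (x t)
      rw [hΦe] at h
      nlinarith [h]
    have hstep : ε * ∫ t in Ici (0:ℝ), x (t + τ) * φ (x t)
        = ∫ t in Ici (0:ℝ), ε * (x (t + τ) * φ (x t)) :=
      (MeasureTheory.integral_const_mul ε _).symm
    rw [hstep]
    have hmono2 : ∫ t in Ici (0:ℝ), ε * (x (t + τ) * φ (x t))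
        ≤ ∫ t in Ici (0:ℝ), (Φ (x (t + τ)) - Φ (x t) + x t * φ (x t)) := by
      apply setIntegral_mono ((hB.const_mul ε).integrableOn)
        (((hΦxτ.sub hΦx).add hA).integrableOn)
      intro t
      exact hpt t
    have hs1 : ∫ t in Ici (0:ℝ), (Φ (x (t + τ)) - Φ (x t) + x t * φ (x t))
        = (∫ t in Ici (0:ℝ), (Φ (x (t + τ)) - Φ (x t)))
          + ∫ t in Ici (0:ℝ), x t * φ (x t) :=
      integral_add ((hΦxτ.integrableOn).sub (hΦx.integrableOn)) (hA.integrableOn)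
    have hs2 : ∫ t in Ici (0:ℝ), (Φ (x (t + τ)) - Φ (x t))
        = (∫ t in Ici (0:ℝ), Φ (x (t + τ))) - (∫ t in Ici (0:ℝ), Φ (x t)) :=
      integral_sub (hΦxτ.integrableOn) (hΦx.integrableOn)
    rw [hs1, hs2] at hmono2
    linarith
  rw [abs_le]
  constructor
  · have := main (-1) (Or.inr rfl)
    linarith
  · have := main 1 (Or.inl rfl)
    linarith

theorem static_abs_shift_ineq_iff_monotone_odd
    (φ : ℝ → ℝ) (hφ : Measurable φ) (hφ0 : φ 0 = 0)
    (hbound : ∃ C : ℝ, 0 ≤ C ∧ ∀ u : ℝ, |φ u| ≤ C * |u|) :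
    (∀ (τ : ℝ) (x : ℝ → ℝ), IsSignal x →
      |∫ t in Ici (0:ℝ), x (t + τ) * φ (x t)| ≤ ∫ t in Ici (0:ℝ), x t * φ (x t))
    ↔ (Monotone φ ∧ ∀ᵐ u ∂(volume : Measure ℝ), φ (-u) = -φ u) := by
  constructor
  · intro h
    have key := key_ineq φ hφ0 h
    exact ⟨mono_of_key φ key, odd_of_key φ key⟩
  · rintro ⟨hmono, hodd⟩ τ x ⟨hx2, hx0⟩
    obtain ⟨C, hC0, hC⟩ := hbound
    exact backward_dir φ hφ hφ0 C hC0 hC hmono hodd τ x hx2 hx0
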